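/- A finite simple graph with n vertices and at least n + 1 edges contains a cycle of length at most ⌈2n/3⌉. -/

import Mathlib

open SimpleGraph


open SimpleGraph

private lemma walk_split_first {V : Type*} {G : SimpleGraph V} {S : V → Prop} [DecidablePred S] :
    ∀ {b a : V} (Q : G.Walk b a), (∃ v ∈ Q.support, S v) →
      ∃ (x : V) (Q1 : G.Walk b x) (Q2 : G.Walk x a),
        S x ∧ Q = Q1.append Q2 ∧ ∀ v ∈ Q1.support, S v → v = x := by
  intro b a Q
  induction Q with
  | nil =>
    intro h
    exact ⟨_, .nil, .nil, by simpa using h, rfl, by simp +contextual⟩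
  | @cons u v w h p ih =>
    intro hex
    by_cases hu : S u
    · exact ⟨u, .nil, .cons h p, hu, rfl, by simp +contextual⟩
    · have hex' : ∃ v ∈ p.support, S v := by
        obtain ⟨v', hv', hSv'⟩ := hex
        rw [Walk.support_cons, List.mem_cons] at hv'
        rcases hv' with rfl | hv'
        · exact absurd hSv' hu
        · exact ⟨v', hv', hSv'⟩
      obtain ⟨x, P1, P2, hx, hpeq, hcond⟩ := ih hex'
      refine ⟨x, .cons h P1, P2, hx, by rw [Walk.cons_append, ← hpeq], ?_⟩
      intro v' hv' hSv'
      rw [Walk.support_cons, List.mem_cons] at hv'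
      rcases hv' with rfl | hv'
      · exact absurd hSv' hu
      · exact hcond v' hv' hSv'

private lemma mem_tail_of_closed {V : Type*} {G : SimpleGraph V} {u : V} (c : G.Walk u u)
    (hc : c ≠ Walk.nil) {v : V} (hv : v ∈ c.support) : v ∈ c.support.tail := by
  cases c with
  | nil => exact absurd rfl hc
  | cons h p =>
    rw [Walk.support_cons, List.tail_cons]
    rw [Walk.support_cons, List.mem_cons] at hv
    rcases hv with rfl | hv
    · exact p.end_mem_support
    · exact hv

private lemma glue_isCycle {V : Type*} {G : SimpleGraph V} {x y : V} (R : G.Walk y x)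
    (P : G.Walk x y)
    (hR : R.support.Nodup) (hP : P.support.Nodup) (hRne : R.length ≠ 0)
    (hdisj : ∀ v ∈ R.support.tail, v ∉ P.support.tail)
    (hE : ∀ e ∈ R.edges, e ∉ P.edges) : (R.append P).IsCycle := by
  have hRt : R.IsTrail := (Walk.IsPath.mk' hR).isTrail
  have hPt : P.IsTrail := (Walk.IsPath.mk' hP).isTrail
  refine ⟨⟨⟨?_⟩, ?_⟩, ?_⟩
  · rw [Walk.edges_append]
    exact List.nodup_append'.mpr ⟨hRt.edges_nodup, hPt.edges_nodup, hE⟩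
  · intro hnil
    have := congrArg Walk.length hnil
    rw [Walk.length_append] at this
    simp only [Walk.length_nil] at this
    omega
  · rw [Walk.tail_support_append]
    refine List.nodup_append'.mpr ⟨?_, ?_, hdisj⟩
    · have hR' := hR
      rw [R.support_eq_cons, List.nodup_cons] at hR'
      exact hR'.2
    · have hP' := hP
      rw [P.support_eq_cons, List.nodup_cons] at hP'
      exact hP'.2


private lemma core {V : Type*} [Fintype V] [DecidableEq V] {G : SimpleGraph V}
    {a b z : V} (hab : G.Adj a b) (Q : G.Walk b a) (hQp : Q.IsPath) (hQab : s(a, b) ∉ Q.edges)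
    (C2 : G.Walk z z) (hC2 : C2.IsCycle) (hC2ab : s(a, b) ∉ C2.edges) :
    ∃ (v : V) (c : G.Walk v v), c.IsCycle ∧ 3 * c.length ≤ 2 * Fintype.card V + 2 := by
  classical
  set n := Fintype.card V with hn
  have hC2nn : C2 ≠ Walk.nil := hC2.ne_nil
  have hC2tl : C2.support.tail.length = C2.length := by
    have h1 := C2.length_support
    have h2 := List.length_tail (l := C2.support)
    omega
  have hFCt_card : C2.support.tail.toFinset.card = C2.length := by
    rw [List.toFinset_card_of_nodup hC2.support_nodup, hC2tl]
  have hFCt_mem : ∀ v, v ∈ C2.support.tail.toFinset ↔ v ∈ C2.support := by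
    intro v
    rw [List.mem_toFinset]
    exact ⟨List.mem_of_mem_tail, mem_tail_of_closed C2 hC2nn⟩
  by_cases hhit : ∃ v ∈ Q.support, v ∈ C2.support
  case neg =>
    push_neg at hhit
    have hC1 : (Walk.cons hab Q).IsCycle := (Walk.cons_isCycle_iff Q hab).mpr ⟨hQp, hQab⟩
    have hQcard : Q.support.toFinset.card = Q.length + 1 := by
      rw [List.toFinset_card_of_nodup hQp.support_nodup, Q.length_support]
    have hdisj : Disjoint Q.support.toFinset C2.support.tail.toFinset := by
      rw [Finset.disjoint_left]
      intro v hv hv2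
      exact hhit v (List.mem_toFinset.mp hv) ((hFCt_mem v).mp hv2)
    have hun : (Q.support.toFinset ∪ C2.support.tail.toFinset).card ≤ n := by
      rw [hn]; exact Finset.card_le_univ _
    rw [Finset.card_union_of_disjoint hdisj, hQcard, hFCt_card] at hun
    rcases le_total (Q.length + 1) C2.length with hle | hle
    · refine ⟨a, Walk.cons hab Q, hC1, ?_⟩
      rw [Walk.length_cons]
      omega
    · exact ⟨z, C2, hC2, by omega⟩
  case pos =>
  obtain ⟨x, Q1, Q2, hxS, hQeq, hQ1S⟩ :=
    walk_split_first (S := fun v => v ∈ C2.support) Q hhit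
  have hex2 : ∃ v ∈ Q2.reverse.support, v ∈ C2.support := ⟨x, by simp, hxS⟩
  obtain ⟨y, T1, T2, hyS, hTeq, hT1S⟩ :=
    walk_split_first (S := fun v => v ∈ C2.support) Q2.reverse hex2
  -- nodup decompositions from Q
  have hQnodup := hQp.support_nodup
  rw [hQeq, Walk.support_append] at hQnodup
  have hQ1nodup : Q1.support.Nodup := (List.nodup_append'.mp hQnodup).1
  have hQ2tln : Q2.support.tail.Nodup := (List.nodup_append'.mp hQnodup).2.1
  have hdisjQ : Q1.support.Disjoint Q2.support.tail := (List.nodup_append'.mp hQnodup).2.2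
  have hQ2nodup : Q2.support.Nodup := by
    rw [Q2.support_eq_cons, List.nodup_cons]
    exact ⟨fun hx2 => hdisjQ Q1.end_mem_support hx2, hQ2tln⟩
  have hQ2rnodup : Q2.reverse.support.Nodup := by
    rw [Walk.support_reverse]; exact List.nodup_reverse.mpr hQ2nodup
  rw [hTeq, Walk.support_append] at hQ2rnodup
  have hT1nodup : T1.support.Nodup := (List.nodup_append'.mp hQ2rnodup).1
  -- edges
  have hQedges := hQp.isTrail.edges_nodup
  rw [hQeq, Walk.edges_append] at hQedges
  have hQ1e : Q1.edges.Nodup := (List.nodup_append'.mp hQedges).1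
  have hdisjE : Q1.edges.Disjoint Q2.edges := (List.nodup_append'.mp hQedges).2.2
  have hT1eQ2 : ∀ e ∈ T1.edges, e ∈ Q2.edges := by
    intro e he
    have h1 : e ∈ Q2.reverse.edges := by
      rw [hTeq, Walk.edges_append]; exact List.mem_append_left _ he
    rwa [Walk.edges_reverse, List.mem_reverse] at h1
  have hQ1eQ : ∀ e ∈ Q1.edges, e ∈ Q.edges := by
    intro e he; rw [hQeq, Walk.edges_append]; exact List.mem_append_left _ he
  have hQ2eQ : ∀ e ∈ Q2.edges, e ∈ Q.edges := by
    intro e he; rw [hQeq, Walk.edges_append]; exact List.mem_append_right _ he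
  have habQ1 : s(a, b) ∉ Q1.edges := fun hc => hQab (hQ1eQ _ hc)
  have hT1e : T1.edges.Nodup := (Walk.IsPath.mk' hT1nodup).isTrail.edges_nodup
  -- the connecting path R
  set R : G.Walk y x := T1.reverse.append (Walk.cons hab Q1) with hRdef
  have hRsup : R.support = T1.reverse.support ++ Q1.support := by
    rw [hRdef, Walk.support_append, Walk.support_cons, List.tail_cons]
  have hRmem : ∀ v ∈ R.support, v ∈ T1.support ∨ v ∈ Q1.support := by
    intro v hv
    rw [hRsup, List.mem_append, Walk.support_reverse, List.mem_reverse] at hv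
    exact hv
  have hRS : ∀ v ∈ R.support, v ∈ C2.support → v = y ∨ v = x := by
    intro v hv hvS
    rcases hRmem v hv with h1 | h1
    · exact Or.inl (hT1S v h1 hvS)
    · exact Or.inr (hQ1S v h1 hvS)
  have hT1rn : T1.reverse.support.Nodup := by
    rw [Walk.support_reverse]; exact List.nodup_reverse.mpr hT1nodup
  rw [T1.reverse.support_eq_cons, List.nodup_cons] at hT1rn
  have hRtail : R.support.tail = T1.reverse.support.tail ++ Q1.support := by
    conv_lhs => rw [hRsup, T1.reverse.support_eq_cons]
    rw [List.cons_append, List.tail_cons]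
  have hjunc : ∀ v, v ∈ T1.support → v ∈ Q1.support → v = x ∧ x = y := by
    intro v h1 h2
    have h3 : v ∈ Q2.reverse.support := by
      rw [hTeq, Walk.mem_support_append_iff]; exact Or.inl h1
    rw [Walk.support_reverse, List.mem_reverse] at h3
    rw [Q2.support_eq_cons, List.mem_cons] at h3
    rcases h3 with rfl | h3
    · exact ⟨rfl, hT1S v h1 hxS⟩
    · exact absurd h3 (fun hh => hdisjQ h2 hh)
  have hRtailnodup : R.support.tail.Nodup := by
    rw [hRtail]
    refine List.nodup_append'.mpr ⟨hT1rn.2, hQ1nodup, ?_⟩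
    intro v hv1 hv2
    have hvT : v ∈ T1.support := by
      have h1 : v ∈ T1.reverse.support := List.mem_of_mem_tail hv1
      rwa [Walk.support_reverse, List.mem_reverse] at h1
    obtain ⟨rfl, hxy'⟩ := hjunc v hvT hv2
    exact hT1rn.1 (hxy' ▸ hv1)
  have hRedges : R.edges = T1.edges.reverse ++ (s(a, b) :: Q1.edges) := by
    rw [hRdef, Walk.edges_append, Walk.edges_reverse, Walk.edges_cons]
  have hRE : R.edges.Nodup := by
    rw [hRedges]
    refine List.nodup_append'.mpr ⟨List.nodup_reverse.mpr hT1e,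
      List.nodup_cons.mpr ⟨habQ1, hQ1e⟩, ?_⟩
    intro e he1 he2
    rw [List.mem_reverse] at he1
    have heQ2 := hT1eQ2 e he1
    rw [List.mem_cons] at he2
    rcases he2 with rfl | he2
    · exact hQab (hQ2eQ _ heQ2)
    · exact hdisjE he2 heQ2
  have hREC2 : ∀ e ∈ R.edges, e ∉ C2.edges := by
    intro e heR heC
    rw [hRedges, List.mem_append, List.mem_reverse, List.mem_cons] at heR
    revert heR heC
    induction e using Sym2.ind with
    | _ c d =>
      intro heR heC
      have hcS : c ∈ C2.support := Walk.fst_mem_support_of_mem_edges C2 heC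
      have hdS : d ∈ C2.support := Walk.snd_mem_support_of_mem_edges C2 heC
      have hne : c ≠ d := (C2.adj_of_mem_edges heC).ne
      rcases heR with he1 | he1 | he1
      · have h1 := hT1S c (Walk.fst_mem_support_of_mem_edges T1 he1) hcS
        have h2 := hT1S d (Walk.snd_mem_support_of_mem_edges T1 he1) hdS
        exact hne (h1.trans h2.symm)
      · exact hC2ab (he1 ▸ heC)
      · have h1 := hQ1S c (Walk.fst_mem_support_of_mem_edges Q1 he1) hcS
        have h2 := hQ1S d (Walk.snd_mem_support_of_mem_edges Q1 he1) hdS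
        exact hne (h1.trans h2.symm)
  have hRlen : R.length = T1.length + Q1.length + 1 := by
    rw [hRdef, Walk.length_append, Walk.length_reverse, Walk.length_cons]
    omega
  have hRnn : R.length ≠ 0 := by omega
  -- rotation helpers
  have hmemrot : ∀ (hw : x ∈ C2.support) (v : V),
      v ∈ (C2.rotate x hw).support ↔ v ∈ C2.support := by
    intro hw v
    rw [Walk.rotate, Walk.mem_support_append_iff]
    conv_rhs => rw [← C2.take_spec hw]
    rw [Walk.mem_support_append_iff]
    exact or_comm
  by_cases hxy : x = y
  · -- R is itself a closed walk meeting C2 exactly at x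
    have hRcyc : (R.copy rfl hxy).IsCycle := by
      refine ⟨⟨⟨?_⟩, ?_⟩, ?_⟩
      · rw [Walk.edges_copy]; exact hRE
      · intro hnil
        have h1 := congrArg Walk.length hnil
        rw [Walk.length_copy] at h1
        simp only [Walk.length_nil] at h1
        omega
      · rw [Walk.support_copy]; exact hRtailnodup
    have hRt_card : R.support.tail.toFinset.card = R.length := by
      rw [List.toFinset_card_of_nodup hRtailnodup]
      have h1 := R.length_support
      have h2 := List.length_tail (l := R.support)
      omega
    have hxR : x ∈ R.support.tail := by
      have h1 : x ∈ (R.copy rfl hxy).support := by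
        rw [Walk.support_copy]; exact R.end_mem_support
      have h2 := mem_tail_of_closed (R.copy rfl hxy) ?_ h1
      · rwa [Walk.support_copy] at h2
      · intro hnil
        have h3 := congrArg Walk.length hnil
        rw [Walk.length_copy] at h3
        simp only [Walk.length_nil] at h3
        omega
    have hinter : R.support.tail.toFinset ∩ C2.support.tail.toFinset = {x} := by
      apply Finset.Subset.antisymm
      · intro v hv
        rw [Finset.mem_inter, List.mem_toFinset] at hv
        have hv1 : v ∈ R.support := List.mem_of_mem_tail hv.1
        have hv2 : v ∈ C2.support := (hFCt_mem v).mp hv.2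
        rw [Finset.mem_singleton]
        rcases hRS v hv1 hv2 with rfl | rfl
        · exact hxy.symm
        · rfl
      · rw [Finset.singleton_subset_iff, Finset.mem_inter, List.mem_toFinset]
        exact ⟨hxR, (hFCt_mem x).mpr hxS⟩
    have hun : (R.support.tail.toFinset ∪ C2.support.tail.toFinset).card ≤ n := by
      rw [hn]; exact Finset.card_le_univ _
    have hcui := Finset.card_union_add_card_inter R.support.tail.toFinset C2.support.tail.toFinset
    rw [hinter, Finset.card_singleton, hRt_card, hFCt_card] at hcui
    rcases le_total R.length C2.length with hle | hle
    · exact ⟨y, R.copy rfl hxy, hRcyc, by rw [Walk.length_copy]; omega⟩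
    · exact ⟨z, C2, hC2, by omega⟩
  · -- x ≠ y : theta configuration
    have hyRn : y ∉ R.support.tail := by
      intro hy
      rw [hRtail, List.mem_append] at hy
      rcases hy with hy | hy
      · exact hT1rn.1 hy
      · exact hxy ((hQ1S y hy hyS).symm)
    have hRnodup : R.support.Nodup := by
      rw [R.support_eq_cons, List.nodup_cons]; exact ⟨hyRn, hRtailnodup⟩
    set C2x := C2.rotate x hxS with hC2xdef
    have hC2xc : C2x.IsCycle := hC2.rotate hxS
    have hC2xlen : C2x.length = C2.length := by
      have h1 : C2x.support.tail.length = C2.support.tail.length :=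
        (Walk.support_rotate C2 x hxS).perm.length_eq
      have h2 := C2x.length_support
      have h3 := C2.length_support
      have h4 := List.length_tail (l := C2x.support)
      have h5 := List.length_tail (l := C2.support)
      omega
    have hC2xmem : ∀ v, v ∈ C2x.support ↔ v ∈ C2.support := hmemrot hxS
    have hC2xE : ∀ e, e ∈ C2x.edges ↔ e ∈ C2.edges := fun e =>
      (Walk.rotate_edges C2 x hxS).mem_iff
    have hyC2x : y ∈ C2x.support := (hC2xmem y).mpr hyS
    set P1 := C2x.takeUntil y hyC2x with hP1def
    set P2 := C2x.dropUntil y hyC2x with hP2def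
    have hspec : P1.append P2 = C2x := C2x.take_spec hyC2x
    have hsupx : P1.support ++ P2.support.tail = C2x.support := by
      rw [← hspec, Walk.support_append]
    have htails : C2x.support.tail = P1.support.tail ++ P2.support.tail := by
      have h1 := hsupx
      rw [P1.support_eq_cons, List.cons_append] at h1
      rw [← h1, List.tail_cons]
    have hN := hC2xc.support_nodup
    rw [htails] at hN
    obtain ⟨hP1tn, hP2tn, hPdisj⟩ := List.nodup_append'.mp hN
    have hxP2 : x ∈ P2.support.tail := by
      have hx2 : x ∈ P2.support := Walk.end_mem_support P2
      rw [P2.support_eq_cons, List.mem_cons] at hx2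
      rcases hx2 with h | h
      · exact absurd h hxy
      · exact h
    have hxP1 : x ∉ P1.support.tail := fun h => hPdisj h hxP2
    have hP1nodup : P1.support.Nodup := by
      rw [P1.support_eq_cons, List.nodup_cons]; exact ⟨hxP1, hP1tn⟩
    have hyP1 : y ∈ P1.support.tail := by
      have h1 : y ∈ P1.support := Walk.end_mem_support P1
      rw [P1.support_eq_cons, List.mem_cons] at h1
      rcases h1 with h | h
      · exact absurd h.symm hxy
      · exact h
    have hyP2 : y ∉ P2.support.tail := fun h => hPdisj hyP1 h
    have hP2nodup : P2.support.Nodup := by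
      rw [P2.support_eq_cons, List.nodup_cons]; exact ⟨hyP2, hP2tn⟩
    have hP1S : ∀ v ∈ P1.support, v ∈ C2.support := fun v hv =>
      (hC2xmem v).mp (Walk.support_takeUntil_subset C2x hyC2x hv)
    have hP2S : ∀ v ∈ P2.support, v ∈ C2.support := fun v hv =>
      (hC2xmem v).mp (Walk.support_dropUntil_subset C2x hyC2x hv)
    have hP1E : ∀ e ∈ P1.edges, e ∈ C2.edges := fun e he =>
      (hC2xE e).mp (Walk.edges_takeUntil_subset C2x hyC2x he)
    have hP2E : ∀ e ∈ P2.edges, e ∈ C2.edges := fun e he =>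
      (hC2xE e).mp (Walk.edges_dropUntil_subset C2x hyC2x he)
    have hlen12 : P1.length + P2.length = C2.length := by
      have h1 := congrArg Walk.length hspec
      rw [Walk.length_append] at h1
      omega
    have hW1 : (R.append P1).IsCycle := by
      refine glue_isCycle R P1 hRnodup hP1nodup hRnn ?_ ?_
      · intro v hv hv2
        have hvR : v ∈ R.support := List.mem_of_mem_tail hv
        have hvS : v ∈ C2.support := hP1S v (List.mem_of_mem_tail hv2)
        rcases hRS v hvR hvS with rfl | rfl
        · exact hyRn hv
        · exact hxP1 hv2
      · intro e he1 he2
        exact hREC2 e he1 (hP1E e he2)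
    have hW2 : (R.append P2.reverse).IsCycle := by
      refine glue_isCycle R P2.reverse hRnodup ?_ hRnn ?_ ?_
      · rw [Walk.support_reverse]; exact List.nodup_reverse.mpr hP2nodup
      · intro v hv hv2
        have hvR : v ∈ R.support := List.mem_of_mem_tail hv
        have hvrev : v ∈ P2.support := by
          have h1 := List.mem_of_mem_tail hv2
          rwa [Walk.support_reverse, List.mem_reverse] at h1
        rcases hRS v hvR (hP2S v hvrev) with rfl | rfl
        · exact hyRn hv
        · have hrev : P2.reverse.support.Nodup := by
            rw [Walk.support_reverse]; exact List.nodup_reverse.mpr hP2nodup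
          rw [P2.reverse.support_eq_cons, List.nodup_cons] at hrev
          exact hrev.1 hv2
      · intro e he1 he2
        rw [Walk.edges_reverse, List.mem_reverse] at he2
        exact hREC2 e he1 (hP2E e he2)
    have hFR_card : R.support.toFinset.card = R.length + 1 := by
      rw [List.toFinset_card_of_nodup hRnodup, R.length_support]
    have hinter : R.support.toFinset ∩ C2.support.tail.toFinset = {x, y} := by
      apply Finset.Subset.antisymm
      · intro v hv
        rw [Finset.mem_inter, List.mem_toFinset] at hv
        rw [Finset.mem_insert, Finset.mem_singleton]
        rcases hRS v hv.1 ((hFCt_mem v).mp hv.2) with rfl | rfl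
        · exact Or.inr rfl
        · exact Or.inl rfl
      · intro v hv
        rw [Finset.mem_insert, Finset.mem_singleton] at hv
        rw [Finset.mem_inter, List.mem_toFinset]
        rcases hv with rfl | rfl
        · exact ⟨R.end_mem_support, (hFCt_mem v).mpr hxS⟩
        · exact ⟨R.start_mem_support, (hFCt_mem v).mpr hyS⟩
    have hpair : ({x, y} : Finset V).card = 2 := Finset.card_pair hxy
    have hun : (R.support.toFinset ∪ C2.support.tail.toFinset).card ≤ n := by
      rw [hn]; exact Finset.card_le_univ _
    have hcui := Finset.card_union_add_card_inter R.support.toFinset C2.support.tail.toFinset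
    rw [hinter, hpair, hFR_card, hFCt_card] at hcui
    have hW1len : (R.append P1).length = R.length + P1.length := Walk.length_append _ _
    have hW2len : (R.append P2.reverse).length = R.length + P2.length := by
      rw [Walk.length_append, Walk.length_reverse]
    rcases le_total C2.length (R.length + P1.length) with h1 | h1
    · rcases le_total C2.length (R.length + P2.length) with h2 | h2
      · exact ⟨z, C2, hC2, by omega⟩
      · exact ⟨y, R.append P2.reverse, hW2, by omega⟩
    · rcases le_total (R.length + P1.length) (R.length + P2.length) with h3 | h3
      · exact ⟨y, R.append P1, hW1, by omega⟩
      · exact ⟨y, R.append P2.reverse, hW2, by omega⟩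


private lemma exists_cycle_of_le_card {V : Type*} [Fintype V] [DecidableEq V]
    (G : SimpleGraph V) [Fintype G.edgeSet] [Nonempty V]
    (h : Fintype.card V ≤ G.edgeFinset.card) :
    ∃ (v : V) (c : G.Walk v v), c.IsCycle := by
  by_contra hcyc
  push_neg at hcyc
  have hG : G.IsAcyclic := fun v c hc => hcyc v c hc
  classical
  obtain ⟨H, ⟨hGH, hHa⟩, hmax⟩ := Set.Finite.exists_maximalFor id
    {H : SimpleGraph V | G ≤ H ∧ H.IsAcyclic} (Set.toFinite _) ⟨G, le_refl G, hG⟩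
  have hconn : H.Connected := by
    rw [connected_iff]
    refine ⟨fun u v => ?_, ‹Nonempty V›⟩
    by_cases huv : u = v
    · subst huv; exact Reachable.refl u
    by_contra hr
    have hadj : ¬H.Adj u v := fun ha => hr ha.reachable
    have hH'a : (H ⊔ edge u v).IsAcyclic := by
      intro w c hc
      by_cases he : s(u, v) ∈ c.edges
      · have h2 : (H ⊔ edge u v).Adj u v ∧
            ((H ⊔ edge u v) \ fromEdgeSet {s(u, v)}).Reachable u v :=
          (adj_and_reachable_delete_edges_iff_exists_cycle).mpr ⟨w, c, hc, he⟩
        refine hr (h2.2.mono ?_)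
        intro p q hpq
        rcases hpq with ⟨hpq1, hpq2⟩
        rcases hpq1 with hpq1 | hpq1
        · exact hpq1
        · rw [edge_adj] at hpq1
          exfalso
          apply hpq2
          simp only [fromEdgeSet_adj, Set.mem_singleton_iff]
          rcases hpq1.1 with ⟨rfl, rfl⟩ | ⟨rfl, rfl⟩
          · exact ⟨rfl, hpq1.2⟩
          · exact ⟨Sym2.eq_swap, hpq1.2⟩
      · have hsub : ∀ e ∈ c.edges, e ∈ H.edgeSet := by
          intro e hec
          have h3 := c.edges_subset_edgeSet hec
          rw [edgeSet_sup] at h3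
          rcases h3 with h3 | h3
          · exact h3
          · rw [edge_edgeSet_of_ne huv] at h3
            rw [Set.mem_singleton_iff] at h3
            exact absurd (h3 ▸ hec) he
        exact hHa (c.transfer H hsub) (hc.transfer hsub)
    have hne' : H ≠ H ⊔ edge u v := by
      intro hEq
      have h5 : (H ⊔ edge u v).Adj u v := by
        rw [sup_adj, edge_adj]
        exact Or.inr ⟨Or.inl ⟨rfl, rfl⟩, huv⟩
      rw [← hEq] at h5
      exact hadj h5
    exact hne' (le_antisymm le_sup_left (hmax (j := H ⊔ edge u v) ⟨le_trans hGH le_sup_left, hH'a⟩ le_sup_left))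
  haveI : Fintype H.edgeSet := Fintype.ofFinite _
  have htree : H.IsTree := ⟨hconn, hHa⟩
  have hcard := htree.card_edgeFinset
  have hsub2 : G.edgeFinset ⊆ H.edgeFinset := edgeFinset_mono hGH
  have h6 : G.edgeFinset.card ≤ Fintype.card V - 1 := hcard ▸ Finset.card_le_card hsub2
  have hpos : 0 < Fintype.card V := Fintype.card_pos
  omega


/-- A finite simple graph with `n` vertices and at least `n + 1` edges contains a
cycle of length at most `⌈2n/3⌉` (which equals `(2n + 2) / 3` in natural division). -/
theorem stmt4 {V : Type*} [Fintype V] [DecidableEq V] (G : SimpleGraph V)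
    [DecidableRel G.Adj]
    (h : Fintype.card V + 1 ≤ G.edgeFinset.card) :
    ∃ (v : V) (c : G.Walk v v), c.IsCycle ∧ c.length ≤ (2 * Fintype.card V + 2) / 3 := by
  classical
  haveI hV : Nonempty V := by
    by_contra hV
    rw [not_nonempty_iff] at hV
    have h0 : Fintype.card V = 0 := Fintype.card_eq_zero
    have h1 : G.edgeFinset.card ≤ Fintype.card (Sym2 V) := Finset.card_le_univ _
    have h2 : Fintype.card (Sym2 V) = Nat.choose (Fintype.card V + 1) 2 := Sym2.card
    rw [h0] at h2
    have h3 : Nat.choose (0 + 1) 2 = 0 := rfl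
    omega
  obtain ⟨v0, C1, hC1⟩ := exists_cycle_of_le_card G (by omega)
  cases C1 with
  | nil => exact absurd rfl hC1.ne_nil
  | @cons _ b _ hab Q =>
    obtain ⟨hQp, hQab⟩ := (Walk.cons_isCycle_iff Q hab).mp hC1
    haveI : Fintype (G.deleteEdges {s(v0, b)}).edgeSet := Fintype.ofFinite _
    have hmono : G.edgeFinset \ {s(v0, b)} ⊆ (G.deleteEdges {s(v0, b)}).edgeFinset := by
      intro e he
      rw [Finset.mem_sdiff, mem_edgeFinset] at he
      rw [mem_edgeFinset, edgeSet_deleteEdges]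
      refine ⟨he.1, ?_⟩
      intro hc
      rw [Set.mem_singleton_iff] at hc
      exact he.2 (by simpa using hc)
    have hcard2 : Fintype.card V ≤ (G.deleteEdges {s(v0, b)}).edgeFinset.card := by
      have h4 := Finset.card_le_card_sdiff_add_card (s := G.edgeFinset) (t := {s(v0, b)})
      have h5 := Finset.card_le_card hmono
      have h6 : ({s(v0, b)} : Finset (Sym2 V)).card = 1 := Finset.card_singleton _
      omega
    obtain ⟨z, C2', hC2'⟩ := exists_cycle_of_le_card (G.deleteEdges {s(v0, b)}) hcard2
    have hsubE : ∀ e ∈ C2'.edges, e ∈ G.edgeSet := by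
      intro e he
      have h7 := C2'.edges_subset_edgeSet he
      rw [edgeSet_deleteEdges] at h7
      exact h7.1
    have hC2 : (C2'.transfer G hsubE).IsCycle := hC2'.transfer hsubE
    have hC2ab : s(v0, b) ∉ (C2'.transfer G hsubE).edges := by
      rw [Walk.edges_transfer]
      intro he
      have h8 := C2'.edges_subset_edgeSet he
      rw [edgeSet_deleteEdges] at h8
      simp at h8
    obtain ⟨v, c, hc, hlen⟩ := core hab Q hQp hQab (C2'.transfer G hsubE) hC2 hC2ab
    exact ⟨v, c, hc, by omega⟩
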